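/- Let F be a family of k-subsets of X = X_1 ∪ X_2 (disjoint, |X_1| = n_1, |X_2| = n_2) such that every F ∈ F satisfies |F ∩ X_1| = l and |F ∩ X_2| = k - l. If n_1 ≥ 2l, n_2 ≥ 2(k-l) and F is intersecting, then |F| ≤ max{ C(n_1-1, l-1)·C(n_2, k-l), C(n_1, l)·C(n_2-1, k-l-1) }. -/

import Mathlib

open Finset

namespace TwoPartEKR

variable {N : ℕ}

def znearF (N c : ℕ) : Finset (ZMod N) :=
  ((Finset.range c) ×ˢ (Finset.range c)).image (fun ab => (ab.1 : ZMod N) - (ab.2 : ZMod N))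

lemma mem_znearF {c : ℕ} {x : ZMod N} :
    x ∈ znearF N c ↔ ∃ a b : ℕ, a < c ∧ b < c ∧ x = (a : ZMod N) - (b : ZMod N) := by
  simp only [znearF, mem_image, mem_product, mem_range, Prod.exists]
  constructor
  · rintro ⟨a, b, ⟨ha, hb⟩, rfl⟩; exact ⟨a, b, ha, hb, rfl⟩
  · rintro ⟨a, b, ha, hb, rfl⟩; exact ⟨a, b, ⟨ha, hb⟩, rfl⟩

lemma znearF_neg {c : ℕ} {x : ZMod N} (h : x ∈ znearF N c) : -x ∈ znearF N c := by
  rw [mem_znearF] at h ⊢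
  obtain ⟨a, b, ha, hb, rfl⟩ := h
  exact ⟨b, a, hb, ha, by ring⟩

lemma not_mem_znearF {c w : ℕ} (hc : 1 ≤ c) (hN : 2 * c ≤ N) (hw : w ≤ N - 2 * c) :
    ((c + w : ℕ) : ZMod N) ∉ znearF N c := by
  rw [mem_znearF]
  rintro ⟨a, b, ha, hb, hx⟩
  have h1 : ((c + w + b : ℕ) : ZMod N) = (a : ZMod N) := by
    push_cast at hx ⊢
    rw [hx]; ring
  have := congrArg ZMod.val h1
  rw [ZMod.val_cast_of_lt (by omega), ZMod.val_cast_of_lt (by omega : a < N)] at this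
  omega

lemma card_znearF {c : ℕ} (hc : 1 ≤ c) (hN : 2 * c ≤ N) : (znearF N c).card = 2 * c - 1 := by
  have h1 : znearF N c = (Finset.range (2 * c - 1)).image
      (fun j : ℕ => ((j : ZMod N) - ((c - 1 : ℕ) : ZMod N))) := by
    ext x
    rw [mem_znearF, mem_image]
    constructor
    · rintro ⟨a, b, ha, hb, rfl⟩
      refine ⟨a + (c - 1) - b, mem_range.mpr (by omega), ?_⟩
      have hb' : b ≤ a + (c - 1) := by omega
      rw [Nat.cast_sub hb', Nat.cast_add]
      ring
    · rintro ⟨j, hj, rfl⟩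
      rw [mem_range] at hj
      by_cases hjc : j < c
      · exact ⟨j, c - 1, hjc, by omega, rfl⟩
      · obtain ⟨d, rfl⟩ : ∃ d, c = d + 1 := ⟨c - 1, by omega⟩
        refine ⟨d, 2 * d - j, by omega, by omega, ?_⟩
        simp only [Nat.add_sub_cancel]
        rw [Nat.cast_sub (by omega : j ≤ 2 * d)]
        push_cast
        ring
  rw [h1, Finset.card_image_of_injOn, Finset.card_range]
  intro a ha b hb hab
  simp only [mem_coe, mem_range] at ha hb
  have h2 : (a : ZMod N) = (b : ZMod N) := sub_left_inj.mp hab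
  have := congrArg ZMod.val h2
  rwa [ZMod.val_cast_of_lt (by omega), ZMod.val_cast_of_lt (by omega)] at this


/-- shifted union `B + {0,…,g}` -/
def shifts (B : Finset (ZMod N)) (g : ℕ) : Finset (ZMod N) :=
  (Finset.range (g + 1)).biUnion (fun w => B.image (fun b => b + (w : ZMod N)))

lemma mem_shifts {B : Finset (ZMod N)} {g : ℕ} {x : ZMod N} :
    x ∈ shifts B g ↔ ∃ w ≤ g, ∃ b ∈ B, x = b + (w : ZMod N) := by
  simp only [shifts, mem_biUnion, mem_range, mem_image]
  constructor
  · rintro ⟨w, hw, b, hb, rfl⟩; exact ⟨w, by omega, b, hb, rfl⟩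
  · rintro ⟨w, hw, b, hb, rfl⟩; exact ⟨w, by omega, b, hb, rfl⟩

lemma shifts_succ (B : Finset (ZMod N)) (g : ℕ) :
    shifts B (g + 1) = shifts B g ∪ (shifts B g).image (fun x => x + 1) := by
  ext x
  simp only [mem_union, mem_image, mem_shifts]
  constructor
  · rintro ⟨w, hw, b, hb, rfl⟩
    rcases Nat.eq_zero_or_pos w with h0 | h0
    · subst h0; exact Or.inl ⟨0, by omega, b, hb, rfl⟩
    · refine Or.inr ⟨b + ((w - 1 : ℕ) : ZMod N), ⟨w - 1, by omega, b, hb, rfl⟩, ?_⟩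
      have : ((w : ℕ) : ZMod N) = ((w - 1 : ℕ) : ZMod N) + 1 := by
        rw [show w = (w - 1) + 1 by omega]; push_cast; ring
      rw [this]; ring
  · rintro (⟨w, hw, b, hb, rfl⟩ | ⟨y, ⟨w, hw, b, hb, rfl⟩, rfl⟩)
    · exact ⟨w, by omega, b, hb, rfl⟩
    · exact ⟨w + 1, by omega, b, hb, by push_cast; ring⟩

lemma card_shifts [NeZero N] {B : Finset (ZMod N)} (hB : B.Nonempty) (g : ℕ) :
    min N (B.card + g) ≤ (shifts B g).card := by
  induction g with
  | zero =>
      have : shifts B 0 = B := by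
        ext x; rw [mem_shifts]
        constructor
        · rintro ⟨w, hw, b, hb, rfl⟩
          interval_cases w
          simpa using hb
        · intro hx; exact ⟨0, le_rfl, x, hx, by simp⟩
      rw [this]
      exact min_le_of_right_le le_rfl
  | succ g ih =>
      have hsub : shifts B g ⊆ shifts B (g + 1) := by
        intro x hx; rw [mem_shifts] at hx ⊢
        obtain ⟨w, hw, b, hb, rfl⟩ := hx
        exact ⟨w, by omega, b, hb, rfl⟩
      by_cases hfull : (shifts B g).card = N
      · have := Finset.card_le_card hsub
        have h2 : (shifts B (g+1)).card ≤ N := by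
          simpa [ZMod.card] using Finset.card_le_univ (shifts B (g+1))
        omega
      · -- there is a new element in (shifts B g).image (+1)
        have hcard : (shifts B g).card < N := by
          have h2 : (shifts B g).card ≤ N := by
            simpa [ZMod.card] using Finset.card_le_univ (shifts B g)
          omega
        have hex : ∃ y ∈ (shifts B g).image (fun x => x + 1), y ∉ shifts B g := by
          by_contra hcon
          push_neg at hcon
          have himg : (shifts B g).image (fun x => x + 1) = shifts B g := by
            apply Finset.eq_of_subset_of_card_le hcon
            rw [Finset.card_image_of_injective _ (add_left_injective 1)]
          -- then shifts B g is closed under +k for all k, hence = univ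
          have hk : ∀ k : ℕ, ∀ x ∈ shifts B g, x + (k : ZMod N) ∈ shifts B g := by
            intro k
            induction k with
            | zero => intro x hx; simpa using hx
            | succ k ihk =>
                intro x hx
                have h1 : x + (k : ZMod N) + 1 ∈ shifts B g := by
                  rw [← himg]; exact Finset.mem_image_of_mem _ (ihk x hx)
                have : ((k + 1 : ℕ) : ZMod N) = (k : ZMod N) + 1 := by push_cast; ring
                rw [this, ← add_assoc]; exact h1
          obtain ⟨x0, hx0⟩ := hB
          have hx0' : x0 ∈ shifts B g := by
            rw [mem_shifts]; exact ⟨0, by omega, x0, hx0, by simp⟩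
          have : ∀ y : ZMod N, y ∈ shifts B g := by
            intro y
            have := hk (y - x0).val x0 hx0'
            rwa [ZMod.natCast_zmod_val, add_sub_cancel] at this
          have : (shifts B g) = Finset.univ := Finset.eq_univ_iff_forall.mpr this
          rw [this, Finset.card_univ, ZMod.card] at hfull
          exact hfull rfl
        obtain ⟨y, hy1, hy2⟩ := hex
        have hy3 : y ∈ shifts B (g+1) := by
          rw [shifts_succ]; exact Finset.mem_union_right _ hy1
        have hins : insert y (shifts B g) ⊆ shifts B (g+1) := by
          intro z hz
          rcases Finset.mem_insert.mp hz with rfl | hz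
          · exact hy3
          · exact hsub hz
        have hcard2 : (shifts B g).card + 1 ≤ (shifts B (g+1)).card := by
          have := Finset.card_le_card hins
          rwa [Finset.card_insert_of_notMem hy2] at this
        omega

/-- Key lemma D : cross-near nonempty sets have small total size. -/
lemma cross_near_card [NeZero N] {r : ℕ} (hr : 1 ≤ r) (hN : 2 * r ≤ N)
    {A B : Finset (ZMod N)} (hA : A.Nonempty) (hB : B.Nonempty)
    (hcross : ∀ a ∈ A, ∀ b ∈ B, a - b ∈ znearF N r) :
    A.card + B.card ≤ 2 * r := by
  set B' := B.image (fun b => b + ((r : ℕ) : ZMod N)) with hB'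
  have hB'ne : B'.Nonempty := hB.image _
  have hB'card : B'.card = B.card := Finset.card_image_of_injective _ (add_left_injective _)
  set C := shifts B' (N - 2 * r) with hC
  have hCcard : min N (B.card + (N - 2 * r)) ≤ C.card := by
    rw [← hB'card]; exact card_shifts hB'ne _
  have hdisj : ∀ a ∈ A, a ∉ C := by
    intro a ha haC
    rw [hC, mem_shifts] at haC
    obtain ⟨w, hw, b', hb', rfl⟩ := haC
    rw [hB', Finset.mem_image] at hb'
    obtain ⟨b, hb, rfl⟩ := hb'
    have hmem := hcross _ ha _ hb
    have : b + ((r:ℕ) : ZMod N) + (w : ZMod N) - b = ((r + w : ℕ) : ZMod N) := by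
      push_cast; ring
    rw [this] at hmem
    exact not_mem_znearF hr hN hw hmem
  have hunion : A.card + C.card ≤ N := by
    have hdisj2 : Disjoint A C := Finset.disjoint_left.mpr hdisj
    have := Finset.card_le_univ (A ∪ C)
    rw [Finset.card_union_of_disjoint hdisj2] at this
    simpa [ZMod.card] using this
  rcases min_cases N (B.card + (N - 2 * r)) with ⟨hmin, _⟩ | ⟨hmin, _⟩
  · rw [hmin] at hCcard
    obtain ⟨a, ha⟩ := hA
    have : 0 < A.card := Finset.card_pos.mpr ⟨a, ha⟩
    omega
  · rw [hmin] at hCcard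
    omega

/-- Weak pair bound via a single shift. -/
lemma cross_near_card_weak [NeZero N] {r : ℕ} (hr : 1 ≤ r) (hN : 2 * r ≤ N)
    {A B : Finset (ZMod N)}
    (hcross : ∀ a ∈ A, ∀ b ∈ B, a - b ∈ znearF N r) :
    A.card + B.card ≤ N := by
  set B' := B.image (fun b => b + ((r : ℕ) : ZMod N)) with hB'
  have hB'card : B'.card = B.card := Finset.card_image_of_injective _ (add_left_injective _)
  have hdisj : ∀ a ∈ A, a ∉ B' := by
    intro a ha haB'
    rw [hB', Finset.mem_image] at haB'
    obtain ⟨b, hb, rfl⟩ := haB'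
    have hmem := hcross _ ha _ hb
    have : b + ((r:ℕ) : ZMod N) - b = ((r + 0 : ℕ) : ZMod N) := by push_cast; ring
    rw [this] at hmem
    exact not_mem_znearF hr hN (by omega) hmem
  have hdisj2 : Disjoint A B' := Finset.disjoint_left.mpr hdisj
  have := Finset.card_le_univ (A ∪ B')
  rw [Finset.card_union_of_disjoint hdisj2] at this
  simp only [ZMod.card] at this
  omega


theorem circle_lemma {m n l r : ℕ} [NeZero m] [NeZero n] (hl : 1 ≤ l) (hr : 1 ≤ r)
    (hm : 2 * l ≤ m) (hn : 2 * r ≤ n) (P : Finset (ZMod m × ZMod n))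
    (hP : ∀ p ∈ P, ∀ q ∈ P, p.1 - q.1 ∈ znearF m l ∨ p.2 - q.2 ∈ znearF n r) :
    P.card ≤ max (l * n) (r * m) := by
  classical
  set row : ZMod m → Finset (ZMod n) := fun s => (P.filter (fun p => p.1 = s)).image Prod.snd
    with hrow
  have hrowmem : ∀ s t, t ∈ row s ↔ (s, t) ∈ P := by
    intro s t
    simp only [hrow, mem_image, mem_filter]
    constructor
    · rintro ⟨p, ⟨hp, h1⟩, h2⟩
      have : p = (s, t) := Prod.ext h1 h2
      rwa [← this]
    · intro h; exact ⟨(s, t), ⟨h, rfl⟩, rfl⟩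
  have htotal : P.card = ∑ s : ZMod m, (row s).card := by
    rw [Finset.card_eq_sum_card_fiberwise (f := Prod.fst) (t := univ) (fun p _ => mem_univ _)]
    refine Finset.sum_congr rfl (fun s _ => ?_)
    rw [hrow]
    refine (Finset.card_image_of_injOn ?_).symm
    intro p hp q hq hpq
    simp only [mem_coe, mem_filter] at hp hq
    exact Prod.ext (by rw [hp.2, hq.2]) hpq
  have hcross : ∀ s s', (s - s') ∉ znearF m l →
      ∀ t ∈ row s, ∀ t' ∈ row s', t - t' ∈ znearF n r := by
    intro s s' hfar t ht t' ht'
    have h1 := hP (s, t) ((hrowmem s t).mp ht) (s', t') ((hrowmem s' t').mp ht')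
    rcases h1 with h1 | h1
    · exact absurd h1 hfar
    · exact h1
  have hrowcard_le : ∀ s, (row s).card ≤ n := by
    intro s
    have := Finset.card_le_univ (row s)
    simpa [ZMod.card] using this
  by_cases hcase : ∃ s0, (row s0).Nonempty ∧ ∀ s', (s0 - s') ∉ znearF m l → row s' = ∅
  · -- Case A : bound l * n
    obtain ⟨s0, hs0ne, hs0⟩ := hcase
    set g : ℕ → ZMod m := fun j => s0 + ((l - 1 : ℕ) : ZMod m) - (j : ZMod m) with hg
    have hconf : ∀ s, row s ≠ ∅ → ∃ j, j < 2 * l - 1 ∧ s = g j := by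
      intro s hs
      have hnear : (s0 - s) ∈ znearF m l := by
        by_contra hcon
        exact hs (hs0 s hcon)
      rw [mem_znearF] at hnear
      obtain ⟨a, b, ha, hb, hab⟩ := hnear
      refine ⟨a + (l - 1) - b, by omega, ?_⟩
      simp only [hg]
      have hcast : ((a + (l - 1) - b : ℕ) : ZMod m)
          = (a : ZMod m) + ((l - 1 : ℕ) : ZMod m) - (b : ZMod m) := by
        rw [Nat.cast_sub (by omega), Nat.cast_add]
      rw [hcast]
      have hs' : s = s0 - ((a : ZMod m) - (b : ZMod m)) := by rw [← hab]; ring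
      rw [hs']; ring
    have hginj : Set.InjOn g (Finset.range (2 * l - 1)) := by
      intro a ha b hb hab
      simp only [mem_coe, mem_range] at ha hb
      simp only [hg] at hab
      have h2 : (a : ZMod m) = (b : ZMod m) := by linear_combination -hab
      have := congrArg ZMod.val h2
      rwa [ZMod.val_cast_of_lt (by omega), ZMod.val_cast_of_lt (by omega)] at this
    have h1 : P.card = ∑ j ∈ Finset.range (2 * l - 1), (row (g j)).card := by
      rw [htotal, ← Finset.sum_image (f := fun s => (row s).card) hginj]
      refine (Finset.sum_subset (Finset.subset_univ _) ?_).symm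
      intro s _ hs
      by_contra hcon
      have hne : row s ≠ ∅ := by
        intro h0; rw [h0] at hcon; simp at hcon
      obtain ⟨j, hj, rfl⟩ := hconf s hne
      exact hs (Finset.mem_image_of_mem g (Finset.mem_range.mpr hj))
    have hsplit : ∑ j ∈ Finset.range (2 * l - 1), (row (g j)).card =
        (∑ j ∈ Finset.range (l - 1), ((row (g j)).card + (row (g (j + l))).card))
          + (row (g (l - 1))).card := by
      rw [show 2 * l - 1 = l + (l - 1) by omega, Finset.sum_range_add]
      rw [show l = (l - 1) + 1 by omega, Finset.sum_range_succ, Finset.sum_add_distrib]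
      rw [show (l - 1) + 1 = l by omega]
      have e3 : ∑ j ∈ Finset.range (l - 1), (row (g (l + j))).card
          = ∑ j ∈ Finset.range (l - 1), (row (g (j + l))).card := by
        refine Finset.sum_congr rfl (fun j _ => ?_)
        rw [Nat.add_comm]
      rw [e3]
      omega
    have hpair : ∀ j ∈ Finset.range (l - 1),
        (row (g j)).card + (row (g (j + l))).card ≤ n := by
      intro j _
      refine cross_near_card_weak hr hn (A := row (g j)) (B := row (g (j + l))) ?_
      refine hcross _ _ ?_
      have hdiff : g j - g (j + l) = ((l + 0 : ℕ) : ZMod m) := by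
        simp only [hg]
        push_cast
        ring
      rw [hdiff]
      exact not_mem_znearF hl hm (by omega)
    have : P.card ≤ (l - 1) * n + n := by
      rw [h1, hsplit]
      have hb1 : ∑ j ∈ Finset.range (l - 1), ((row (g j)).card + (row (g (j + l))).card)
          ≤ ∑ _j ∈ Finset.range (l - 1), n := Finset.sum_le_sum hpair
      rw [Finset.sum_const, Finset.card_range, smul_eq_mul] at hb1
      have hb2 := hrowcard_le (g (l - 1))
      omega
    have hln : (l - 1) * n + n = l * n := by
      have : l - 1 + 1 = l := by omega
      calc (l - 1) * n + n = ((l - 1) + 1) * n := by ring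
        _ = l * n := by rw [this]
    rw [hln] at this
    exact le_trans this (le_max_left _ _)
  · -- Case B : bound r * m
    push_neg at hcase
    have hpartner : ∀ s, (row s).Nonempty → ∃ s', (s - s') ∉ znearF m l ∧ (row s').Nonempty := by
      intro s hs
      obtain ⟨s', h1, h2⟩ := hcase s hs
      exact ⟨s', h1, h2⟩
    have pairbound : ∀ s s', (s - s') ∉ znearF m l →
        (row s).card + (row s').card ≤ 2 * r := by
      intro s s' hfar
      by_cases h1 : (row s).Nonempty
      · by_cases h2 : (row s').Nonempty
        · exact cross_near_card hr hn h1 h2 (hcross s s' hfar)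
        · have hz : (row s').card = 0 := by
            rw [Finset.card_eq_zero]; exact Finset.not_nonempty_iff_eq_empty.mp h2
          obtain ⟨s'', hfar'', hne''⟩ := hpartner s h1
          have hb := cross_near_card hr hn h1 hne'' (hcross s s'' hfar'')
          have hpos : 0 < (row s'').card := Finset.card_pos.mpr hne''
          omega
      · have hz : (row s).card = 0 := by
          rw [Finset.card_eq_zero]; exact Finset.not_nonempty_iff_eq_empty.mp h1
        by_cases h2 : (row s').Nonempty
        · obtain ⟨s'', hfar'', hne''⟩ := hpartner s' h2
          have hb := cross_near_card hr hn h2 hne'' (hcross s' s'' hfar'')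
          have hpos : 0 < (row s'').card := Finset.card_pos.mpr hne''
          omega
        · have hz' : (row s').card = 0 := by
            rw [Finset.card_eq_zero]; exact Finset.not_nonempty_iff_eq_empty.mp h2
          omega
    set Δ := m - (2 * l - 1) with hΔ
    have hΔpos : 0 < Δ := by omega
    have hfarcount : ∀ s : ZMod m,
        (univ.filter (fun s' => (s - s') ∉ znearF m l)).card = Δ := by
      intro s
      have hpos : (univ.filter (fun s' => (s - s') ∈ znearF m l))
          = (znearF m l).image (fun x => s - x) := by
        ext s'
        simp only [mem_filter, mem_univ, true_and, mem_image]
        constructor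
        · intro h; exact ⟨s - s', h, by ring⟩
        · rintro ⟨x, hx, rfl⟩
          have hxx : s - (s - x) = x := by ring
          rwa [hxx]
      have hposcard : (univ.filter (fun s' => (s - s') ∈ znearF m l)).card = 2 * l - 1 := by
        rw [hpos, Finset.card_image_of_injective _ sub_right_injective, card_znearF hl hm]
      have hsum := Finset.card_filter_add_card_filter_not
        (s := (univ : Finset (ZMod m))) (p := fun s' => (s - s') ∈ znearF m l)
      rw [Finset.card_univ, ZMod.card] at hsum
      omega
    have hsymm : ∀ s s' : ZMod m, ((s - s') ∈ znearF m l) ↔ ((s' - s) ∈ znearF m l) := by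
      intro s s'
      constructor
      · intro h; have := znearF_neg h; rwa [neg_sub] at this
      · intro h; have := znearF_neg h; rwa [neg_sub] at this
    have hmain : ∀ s : ZMod m,
        ∑ s' ∈ univ.filter (fun s' => (s - s') ∉ znearF m l),
          ((row s).card + (row s').card) ≤ Δ * (2 * r) := by
      intro s
      calc ∑ s' ∈ univ.filter (fun s' => (s - s') ∉ znearF m l),
            ((row s).card + (row s').card)
          ≤ ∑ _s' ∈ univ.filter (fun s' => (s - s') ∉ znearF m l), (2 * r) := by
            refine Finset.sum_le_sum (fun s' hs' => ?_)
            exact pairbound s s' (Finset.mem_filter.mp hs').2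
        _ = Δ * (2 * r) := by rw [Finset.sum_const, hfarcount s, smul_eq_mul]
    have hexpand : ∀ s : ZMod m,
        ∑ s' ∈ univ.filter (fun s' => (s - s') ∉ znearF m l),
          ((row s).card + (row s').card)
        = Δ * (row s).card + ∑ s' ∈ univ.filter (fun s' => (s - s') ∉ znearF m l),
            (row s').card := by
      intro s
      rw [Finset.sum_add_distrib, Finset.sum_const, hfarcount s, smul_eq_mul]
    have hswap : ∑ s : ZMod m, ∑ s' ∈ univ.filter (fun s' => (s - s') ∉ znearF m l),
        (row s').card = Δ * P.card := by
      calc ∑ s : ZMod m, ∑ s' ∈ univ.filter (fun s' => (s - s') ∉ znearF m l), (row s').card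
          = ∑ s : ZMod m, ∑ s' : ZMod m,
              if (s - s') ∉ znearF m l then (row s').card else 0 := by
            exact Finset.sum_congr rfl (fun s _ => by rw [Finset.sum_filter])
        _ = ∑ s' : ZMod m, ∑ s : ZMod m,
              if (s - s') ∉ znearF m l then (row s').card else 0 := Finset.sum_comm
        _ = ∑ s' : ZMod m, Δ * (row s').card := by
            refine Finset.sum_congr rfl (fun s' _ => ?_)
            rw [← Finset.sum_filter, Finset.sum_const, smul_eq_mul]
            congr 1
            have hflt : (univ.filter (fun s : ZMod m => (s - s') ∉ znearF m l))
                = (univ.filter (fun s : ZMod m => (s' - s) ∉ znearF m l)) := by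
              refine Finset.filter_congr (fun s _ => ?_)
              rw [not_iff_not]
              exact hsymm s s'
            rw [hflt]
            exact hfarcount s'
        _ = Δ * P.card := by rw [← Finset.mul_sum, htotal]
    -- combine
    have hfinal : Δ * P.card + Δ * P.card ≤ m * (Δ * (2 * r)) := by
      have hsumall : ∑ s : ZMod m, ∑ s' ∈ univ.filter (fun s' => (s - s') ∉ znearF m l),
          ((row s).card + (row s').card) ≤ ∑ _s : ZMod m, Δ * (2 * r) :=
        Finset.sum_le_sum (fun s _ => hmain s)
      rw [Finset.sum_const, Finset.card_univ, ZMod.card, smul_eq_mul] at hsumall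
      have hlhs : ∑ s : ZMod m, ∑ s' ∈ univ.filter (fun s' => (s - s') ∉ znearF m l),
          ((row s).card + (row s').card) = Δ * P.card + Δ * P.card := by
        calc ∑ s : ZMod m, ∑ s' ∈ univ.filter (fun s' => (s - s') ∉ znearF m l),
              ((row s).card + (row s').card)
            = ∑ s : ZMod m, (Δ * (row s).card
                + ∑ s' ∈ univ.filter (fun s' => (s - s') ∉ znearF m l), (row s').card) :=
              Finset.sum_congr rfl (fun s _ => hexpand s)
          _ = (∑ s : ZMod m, Δ * (row s).card)
                + ∑ s : ZMod m, ∑ s' ∈ univ.filter (fun s' => (s - s') ∉ znearF m l),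
                  (row s').card := Finset.sum_add_distrib
          _ = Δ * P.card + Δ * P.card := by
              rw [hswap, ← Finset.mul_sum, ← htotal]
      rwa [hlhs] at hsumall
    have hPrm : P.card ≤ r * m := by
      by_contra hcon
      push_neg at hcon
      have h2 : Δ * (2 * (r * m)) < Δ * (2 * P.card) := by
        exact Nat.mul_lt_mul_of_pos_left (by omega) hΔpos
      have h3 : m * (Δ * (2 * r)) = Δ * (2 * (r * m)) := by ring
      have h4 : Δ * (2 * P.card) = Δ * P.card + Δ * P.card := by ring
      omega
    exact le_trans hPrm (le_max_right _ _)


section PermCount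

variable {β : Type*} [Fintype β] [DecidableEq β]

/-- The number of permutations mapping `s` onto `t`. -/
lemma card_perm_image {s t : Finset β} (hst : s.card = t.card) :
    (univ.filter (fun π : Equiv.Perm β => s.image π = t)).card
      = (s.card).factorial * (Fintype.card β - s.card).factorial := by
  classical
  have key : Fintype.card {π : Equiv.Perm β // s.image π = t}
      = (s.card).factorial * (Fintype.card β - s.card).factorial := by
    have hmemiff : ∀ (π : Equiv.Perm β), s.image π = t → ∀ x, x ∈ s ↔ π x ∈ t := by
      intro π hπ x
      constructor
      · intro hx; rw [← hπ]; exact Finset.mem_image_of_mem _ hx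
      · intro hx
        rw [← hπ, Finset.mem_image] at hx
        obtain ⟨y, hy, hyx⟩ := hx
        rwa [← π.injective hyx]
    let fwd : {π : Equiv.Perm β // s.image π = t} →
        ({x // x ∈ s} ≃ {x // x ∈ t}) × ({x // x ∉ s} ≃ {x // x ∉ t}) :=
      fun ⟨π, hπ⟩ =>
        (Equiv.subtypeEquiv π (hmemiff π hπ),
         Equiv.subtypeEquiv π (fun x => not_iff_not.mpr (hmemiff π hπ x)))
    let bwd : ({x // x ∈ s} ≃ {x // x ∈ t}) × ({x // x ∉ s} ≃ {x // x ∉ t}) →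
        {π : Equiv.Perm β // s.image π = t} := by
      rintro ⟨f, g⟩
      refine ⟨(Equiv.sumCompl (· ∈ s)).symm.trans ((f.sumCongr g).trans
        (Equiv.sumCompl (· ∈ t))), ?_⟩
      have happ : ∀ x (hx : x ∈ s),
          ((Equiv.sumCompl (· ∈ s)).symm.trans ((f.sumCongr g).trans
            (Equiv.sumCompl (· ∈ t)))) x = (f ⟨x, hx⟩ : β) := by
        intro x hx
        simp only [Equiv.trans_apply, Equiv.sumCompl_symm_apply_of_pos (p := (· ∈ s)) hx,
          Equiv.sumCongr_apply, Sum.map_inl, Equiv.sumCompl_apply_inl]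
      have hsub : s.image ((Equiv.sumCompl (· ∈ s)).symm.trans ((f.sumCongr g).trans
            (Equiv.sumCompl (· ∈ t)))) ⊆ t := by
        intro y hy
        rw [Finset.mem_image] at hy
        obtain ⟨x, hx, rfl⟩ := hy
        rw [happ x hx]
        exact (f ⟨x, hx⟩).2
      refine Finset.eq_of_subset_of_card_le hsub ?_
      rw [Finset.card_image_of_injective _ (Equiv.injective _), hst]
    have hlr : Function.LeftInverse bwd fwd := by
      rintro ⟨π, hπ⟩
      apply Subtype.ext
      apply Equiv.ext
      intro x
      by_cases hx : x ∈ s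
      · simp only [bwd, fwd, Equiv.trans_apply, Equiv.sumCompl_symm_apply_of_pos (p := (· ∈ s)) hx,
          Equiv.sumCongr_apply, Sum.map_inl, Equiv.sumCompl_apply_inl, Equiv.subtypeEquiv_apply]
      · simp only [bwd, fwd, Equiv.trans_apply, Equiv.sumCompl_symm_apply_of_neg (p := (· ∈ s)) hx,
          Equiv.sumCongr_apply, Sum.map_inr, Equiv.sumCompl_apply_inr, Equiv.subtypeEquiv_apply]
    have hrl : Function.RightInverse bwd fwd := by
      rintro ⟨f, g⟩
      have h1 : ∀ x : {x // x ∈ s}, (fwd (bwd (f, g))).1 x = f x := by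
        rintro ⟨x, hx⟩
        apply Subtype.ext
        simp only [fwd, bwd, Equiv.subtypeEquiv_apply, Equiv.trans_apply,
          Equiv.sumCompl_symm_apply_of_pos (p := (· ∈ s)) hx, Equiv.sumCongr_apply, Sum.map_inl,
          Equiv.sumCompl_apply_inl]
      have h2 : ∀ x : {x // x ∉ s}, (fwd (bwd (f, g))).2 x = g x := by
        rintro ⟨x, hx⟩
        apply Subtype.ext
        simp only [fwd, bwd, Equiv.subtypeEquiv_apply, Equiv.trans_apply,
          Equiv.sumCompl_symm_apply_of_neg (p := (· ∈ s)) hx, Equiv.sumCongr_apply, Sum.map_inr,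
          Equiv.sumCompl_apply_inr]
      ext x
      · exact congrArg Subtype.val (h1 x)
      · exact congrArg Subtype.val (h2 x)
    have hequiv : {π : Equiv.Perm β // s.image π = t}
        ≃ ({x // x ∈ s} ≃ {x // x ∈ t}) × ({x // x ∉ s} ≃ {x // x ∉ t}) :=
      ⟨fwd, bwd, hlr, hrl⟩
    rw [Fintype.card_congr hequiv, Fintype.card_prod]
    have hc1 : Fintype.card ({x // x ∈ s} ≃ {x // x ∈ t}) = (s.card).factorial := by
      have he : {x // x ∈ s} ≃ {x // x ∈ t} := by
        apply Fintype.equivOfCardEq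
        simp only [Fintype.card_coe, hst]
      rw [Fintype.card_equiv he, Fintype.card_coe]
    have hc2 : Fintype.card ({x // x ∉ s} ≃ {x // x ∉ t})
        = (Fintype.card β - s.card).factorial := by
      have hcs : Fintype.card {x // x ∉ s} = Fintype.card β - s.card := by
        rw [Fintype.card_subtype_compl]
        congr 1
        simp [Fintype.card_coe]
      have hct : Fintype.card {x // x ∉ t} = Fintype.card β - s.card := by
        rw [Fintype.card_subtype_compl]
        congr 1
        simp [Fintype.card_coe, hst]
      have he : {x // x ∉ s} ≃ {x // x ∉ t} := Fintype.equivOfCardEq (by rw [hcs, hct])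
      rw [Fintype.card_equiv he, hcs]
    rw [hc1, hc2]
  rw [← key, Fintype.card_subtype]


end PermCount

def win (N : ℕ) (i : ZMod N) (c : ℕ) : Finset (ZMod N) :=
  (Finset.range c).image (fun j : ℕ => i + (j : ZMod N))

lemma mem_win {N c : ℕ} {i x : ZMod N} :
    x ∈ win N i c ↔ ∃ j, j < c ∧ x = i + (j : ZMod N) := by
  simp only [win, mem_image, mem_range]
  constructor
  · rintro ⟨j, hj, rfl⟩; exact ⟨j, hj, rfl⟩
  · rintro ⟨j, hj, rfl⟩; exact ⟨j, hj, rfl⟩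

lemma card_win {N c : ℕ} (hcN : c ≤ N) (i : ZMod N) : (win N i c).card = c := by
  rw [win, Finset.card_image_of_injOn, Finset.card_range]
  intro a ha b hb hab
  simp only [mem_coe, mem_range] at ha hb
  have h2 : (a : ZMod N) = (b : ZMod N) := by
    have := hab
    exact add_left_cancel this
  have := congrArg ZMod.val h2
  rwa [ZMod.val_cast_of_lt (by omega), ZMod.val_cast_of_lt (by omega)] at this

lemma win_injective {N c : ℕ} (hc : 1 ≤ c) (hcN : c < N) {i i' : ZMod N}
    (h : win N i c = win N i' c) : i = i' := by
  have hstart : ∀ (a : ZMod N), a ∈ win N a c ∧ a - 1 ∉ win N a c := by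
    intro a
    constructor
    · rw [mem_win]; exact ⟨0, by omega, by simp⟩
    · rw [mem_win]
      rintro ⟨j, hj, hja⟩
      have : ((j + 1 : ℕ) : ZMod N) = 0 := by
        push_cast
        linear_combination -hja
      rw [ZMod.natCast_eq_zero_iff] at this
      have := Nat.le_of_dvd (by omega) this
      omega
  -- i ∈ win i' c
  have hi : i ∈ win N i' c := h ▸ (hstart i).1
  rw [mem_win] at hi
  obtain ⟨j, hj, hij⟩ := hi
  rcases Nat.eq_zero_or_pos j with h0 | h0
  · subst h0; simpa using hij
  · exfalso
    have hmem : i - 1 ∈ win N i' c := by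
      rw [mem_win]
      refine ⟨j - 1, by omega, ?_⟩
      rw [hij, show j = (j-1)+1 by omega]
      push_cast
      ring
    rw [← h] at hmem
    exact (hstart i).2 hmem

lemma card_perm_arc {N c : ℕ} [NeZero N] (hc : 1 ≤ c) (hcN : c < N) {T : Finset (ZMod N)}
    (hT : T.card = c) :
    (univ.filter (fun π : Equiv.Perm (ZMod N) => ∃ i, (win N i c).image π = T)).card
      = N * (c.factorial * (N - c).factorial) := by
  classical
  have hsplit : (univ.filter (fun π : Equiv.Perm (ZMod N) => ∃ i, (win N i c).image π = T))
      = univ.biUnion (fun i : ZMod N =>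
          univ.filter (fun π : Equiv.Perm (ZMod N) => (win N i c).image π = T)) := by
    ext π
    simp only [mem_filter, mem_univ, true_and, mem_biUnion]
  rw [hsplit, Finset.card_biUnion]
  · have hone : ∀ i : ZMod N,
        (univ.filter (fun π : Equiv.Perm (ZMod N) => (win N i c).image π = T)).card
          = c.factorial * (N - c).factorial := by
      intro i
      have := card_perm_image (s := win N i c) (t := T)
        (by rw [card_win (le_of_lt hcN), hT])
      rw [card_win (le_of_lt hcN), ZMod.card] at this
      exact this
    rw [Finset.sum_congr rfl (fun i _ => hone i), Finset.sum_const, Finset.card_univ,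
      ZMod.card, smul_eq_mul]
  · intro i _ i' _ hii'
    simp only [Finset.disjoint_left, mem_filter, mem_univ, true_and]
    rintro π h1 h2
    exact hii' (win_injective hc hcN (Finset.image_injective π.injective (h1.trans h2.symm)))


end TwoPartEKR

open TwoPartEKR

theorem stmt_3 {α : Type*} [DecidableEq α] (X1 X2 : Finset α) (n1 n2 k l : ℕ)
    (hdisj : Disjoint X1 X2) (hn1 : X1.card = n1) (hn2 : X2.card = n2)
    (hl1 : 1 ≤ l) (hlk : l < k) (h1 : 2 * l ≤ n1) (h2 : 2 * (k - l) ≤ n2)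
    (F : Finset (Finset α))
    (hF : ∀ A ∈ F, A ⊆ X1 ∪ X2 ∧ A.card = k ∧
      (A ∩ X1).card = l ∧ (A ∩ X2).card = k - l)
    (hint : ∀ A ∈ F, ∀ B ∈ F, (A ∩ B).Nonempty) :
    F.card ≤ max ((n1 - 1).choose (l - 1) * n2.choose (k - l))
      (n1.choose l * (n2 - 1).choose (k - l - 1)) := by
  classical
  have hr : 1 ≤ k - l := by omega
  haveI : NeZero n1 := ⟨by omega⟩
  haveI : NeZero n2 := ⟨by omega⟩
  have hln1 : l < n1 := by omega
  have hrn2 : k - l < n2 := by omega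
  -- enumerations of the two parts
  obtain ⟨e1⟩ : Nonempty (ZMod n1 ≃ {x // x ∈ X1}) :=
    ⟨Fintype.equivOfCardEq (by rw [ZMod.card, Fintype.card_coe, hn1])⟩
  obtain ⟨e2⟩ : Nonempty (ZMod n2 ≃ {x // x ∈ X2}) :=
    ⟨Fintype.equivOfCardEq (by rw [ZMod.card, Fintype.card_coe, hn2])⟩
  set f1 : ZMod n1 → α := fun z => (e1 z : α) with hf1
  set f2 : ZMod n2 → α := fun z => (e2 z : α) with hf2
  have hf1inj : Function.Injective f1 := fun a b hab =>
    e1.injective (Subtype.ext hab)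
  have hf2inj : Function.Injective f2 := fun a b hab =>
    e2.injective (Subtype.ext hab)
  -- pull back the trace of A on X1 (resp X2) to ZMod n1 (resp n2)
  set T1 : Finset α → Finset (ZMod n1) := fun A => univ.filter (fun z => f1 z ∈ A ∩ X1)
    with hT1
  set T2 : Finset α → Finset (ZMod n2) := fun A => univ.filter (fun z => f2 z ∈ A ∩ X2)
    with hT2
  have hbridge1 : ∀ A : Finset α, ∀ U : Finset (ZMod n1),
      (U.image f1 = A ∩ X1 ↔ U = T1 A) := by
    intro A U
    constructor
    · intro h
      ext z
      rw [hT1, mem_filter]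
      simp only [mem_univ, true_and]
      constructor
      · intro hz; rw [← h]; exact Finset.mem_image_of_mem _ hz
      · intro hz
        rw [← h, Finset.mem_image] at hz
        obtain ⟨u, hu, huz⟩ := hz
        rwa [← hf1inj huz]
    · rintro rfl
      ext x
      rw [Finset.mem_image]
      constructor
      · rintro ⟨z, hz, rfl⟩
        rw [hT1, mem_filter] at hz
        exact hz.2
      · intro hx
        have hx1 : x ∈ X1 := (Finset.mem_inter.mp hx).2
        refine ⟨e1.symm ⟨x, hx1⟩, ?_, ?_⟩
        · rw [hT1, mem_filter]
          refine ⟨mem_univ _, ?_⟩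
          have : f1 (e1.symm ⟨x, hx1⟩) = x := by
            rw [hf1]; simp
          rwa [this]
        · rw [hf1]; simp
  have hbridge2 : ∀ A : Finset α, ∀ U : Finset (ZMod n2),
      (U.image f2 = A ∩ X2 ↔ U = T2 A) := by
    intro A U
    constructor
    · intro h
      ext z
      rw [hT2, mem_filter]
      simp only [mem_univ, true_and]
      constructor
      · intro hz; rw [← h]; exact Finset.mem_image_of_mem _ hz
      · intro hz
        rw [← h, Finset.mem_image] at hz
        obtain ⟨u, hu, huz⟩ := hz
        rwa [← hf2inj huz]
    · rintro rfl
      ext x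
      rw [Finset.mem_image]
      constructor
      · rintro ⟨z, hz, rfl⟩
        rw [hT2, mem_filter] at hz
        exact hz.2
      · intro hx
        have hx2 : x ∈ X2 := (Finset.mem_inter.mp hx).2
        refine ⟨e2.symm ⟨x, hx2⟩, ?_, ?_⟩
        · rw [hT2, mem_filter]
          refine ⟨mem_univ _, ?_⟩
          have : f2 (e2.symm ⟨x, hx2⟩) = x := by
            rw [hf2]; simp
          rwa [this]
        · rw [hf2]; simp
  have hT1img : ∀ A : Finset α, (T1 A).image f1 = A ∩ X1 := by
    intro A; exact (hbridge1 A (T1 A)).mpr rfl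
  have hT2img : ∀ A : Finset α, (T2 A).image f2 = A ∩ X2 := by
    intro A; exact (hbridge2 A (T2 A)).mpr rfl
  have hT1card : ∀ A ∈ F, (T1 A).card = l := by
    intro A hA
    have := hT1img A
    have hc : ((T1 A).image f1).card = (T1 A).card :=
      Finset.card_image_of_injective _ hf1inj
    rw [this] at hc
    rw [← hc, (hF A hA).2.2.1]
  have hT2card : ∀ A ∈ F, (T2 A).card = k - l := by
    intro A hA
    have := hT2img A
    have hc : ((T2 A).image f2).card = (T2 A).card :=
      Finset.card_image_of_injective _ hf2inj
    rw [this] at hc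
    rw [← hc, (hF A hA).2.2.2]
  have hrecon : ∀ A ∈ F, A = (A ∩ X1) ∪ (A ∩ X2) := by
    intro A hA
    rw [← Finset.inter_union_distrib_left]
    exact (Finset.inter_eq_left.mpr (hF A hA).1).symm
  -- the double count
  set cnt : Equiv.Perm (ZMod n1) → Equiv.Perm (ZMod n2) → ℕ := fun π1 π2 =>
    (F.filter (fun A => (∃ i, (win n1 i l).image π1 = T1 A)
      ∧ (∃ j, (win n2 j (k - l)).image π2 = T2 A))).card with hcnt
  -- upper bound per pair of permutations, via the circle lemma
  have hupper : ∀ π1 π2, cnt π1 π2 ≤ max (l * n2) ((k - l) * n1) := by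
    intro π1 π2
    set G := F.filter (fun A => (∃ i, (win n1 i l).image π1 = T1 A)
      ∧ (∃ j, (win n2 j (k - l)).image π2 = T2 A)) with hG
    set P : Finset (ZMod n1 × ZMod n2) := univ.filter (fun ij => ∃ A ∈ G,
      (win n1 ij.1 l).image π1 = T1 A ∧ (win n2 ij.2 (k - l)).image π2 = T2 A) with hPdef
    have hGP : G.card ≤ P.card := by
      set fidx : Finset α → ZMod n1 × ZMod n2 := fun A =>
        if h : ∃ ij : ZMod n1 × ZMod n2, (win n1 ij.1 l).image π1 = T1 A
            ∧ (win n2 ij.2 (k - l)).image π2 = T2 A then h.choose else (0, 0) with hfidx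
      have hspec : ∀ A ∈ G, (win n1 (fidx A).1 l).image π1 = T1 A
          ∧ (win n2 (fidx A).2 (k - l)).image π2 = T2 A := by
        intro A hA
        rw [hG, mem_filter] at hA
        obtain ⟨hAF, ⟨i, hi⟩, ⟨j, hj⟩⟩ := hA
        have hex : ∃ ij : ZMod n1 × ZMod n2, (win n1 ij.1 l).image π1 = T1 A
            ∧ (win n2 ij.2 (k - l)).image π2 = T2 A := ⟨(i, j), hi, hj⟩
        rw [hfidx]
        simp only [hex, dif_pos]
        exact hex.choose_spec
      apply Finset.card_le_card_of_injOn fidx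
      · intro A hA
        rw [hPdef, mem_coe, mem_filter]
        exact ⟨mem_univ _, A, hA, hspec A hA⟩
      · intro A hA B hB hAB
        have hsA := hspec A hA
        have hsB := hspec B hB
        rw [hAB] at hsA
        have hT1eq : T1 A = T1 B := by rw [← hsA.1, hsB.1]
        have hT2eq : T2 A = T2 B := by rw [← hsA.2, hsB.2]
        have hAF : A ∈ F := Finset.mem_of_mem_filter _ (hG ▸ hA)
        have hBF : B ∈ F := Finset.mem_of_mem_filter _ (hG ▸ hB)
        have hX1 : A ∩ X1 = B ∩ X1 := by
          rw [← hT1img A, ← hT1img B, hT1eq]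
        have hX2 : A ∩ X2 = B ∩ X2 := by
          rw [← hT2img A, ← hT2img B, hT2eq]
        rw [hrecon A hAF, hrecon B hBF, hX1, hX2]
    have hPint : ∀ p ∈ P, ∀ q ∈ P,
        p.1 - q.1 ∈ znearF n1 l ∨ p.2 - q.2 ∈ znearF n2 (k - l) := by
      rintro ⟨i, j⟩ hp ⟨i', j'⟩ hq
      rw [hPdef, mem_filter] at hp hq
      obtain ⟨-, A, hAG, hA1, hA2⟩ := hp
      obtain ⟨-, B, hBG, hB1, hB2⟩ := hq
      have hAF : A ∈ F := Finset.mem_of_mem_filter _ (hG ▸ hAG)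
      have hBF : B ∈ F := Finset.mem_of_mem_filter _ (hG ▸ hBG)
      obtain ⟨x, hx⟩ := hint A hAF B hBF
      rw [Finset.mem_inter] at hx
      have hxX : x ∈ X1 ∪ X2 := (hF A hAF).1 hx.1
      rw [Finset.mem_union] at hxX
      rcases hxX with hx1 | hx2
      · left
        have hxA : x ∈ (T1 A).image f1 := by rw [hT1img]; exact Finset.mem_inter.mpr ⟨hx.1, hx1⟩
        have hxB : x ∈ (T1 B).image f1 := by rw [hT1img]; exact Finset.mem_inter.mpr ⟨hx.2, hx1⟩
        rw [← hA1] at hxA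
        rw [← hB1] at hxB
        rw [Finset.image_image, Finset.mem_image] at hxA hxB
        obtain ⟨z, hz, hzx⟩ := hxA
        obtain ⟨z', hz', hzx'⟩ := hxB
        have hzz : π1 z = π1 z' := hf1inj (hzx.trans hzx'.symm)
        have hzeq : z = z' := π1.injective hzz
        rw [mem_win] at hz hz'
        obtain ⟨a, ha, hza⟩ := hz
        obtain ⟨b, hb, hzb⟩ := hz'
        rw [mem_znearF]
        refine ⟨b, a, hb, ha, ?_⟩
        have : i + (a : ZMod n1) = i' + (b : ZMod n1) := by rw [← hza, ← hzb, hzeq]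
        linear_combination this
      · right
        have hxA : x ∈ (T2 A).image f2 := by rw [hT2img]; exact Finset.mem_inter.mpr ⟨hx.1, hx2⟩
        have hxB : x ∈ (T2 B).image f2 := by rw [hT2img]; exact Finset.mem_inter.mpr ⟨hx.2, hx2⟩
        rw [← hA2] at hxA
        rw [← hB2] at hxB
        rw [Finset.image_image, Finset.mem_image] at hxA hxB
        obtain ⟨z, hz, hzx⟩ := hxA
        obtain ⟨z', hz', hzx'⟩ := hxB
        have hzz : π2 z = π2 z' := hf2inj (hzx.trans hzx'.symm)
        have hzeq : z = z' := π2.injective hzz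
        rw [mem_win] at hz hz'
        obtain ⟨a, ha, hza⟩ := hz
        obtain ⟨b, hb, hzb⟩ := hz'
        rw [mem_znearF]
        refine ⟨b, a, hb, ha, ?_⟩
        have : j + (a : ZMod n2) = j' + (b : ZMod n2) := by rw [← hza, ← hzb, hzeq]
        linear_combination this
    have := circle_lemma hl1 hr h1 h2 P hPint
    calc cnt π1 π2 = G.card := by rw [hcnt, hG]
      _ ≤ P.card := hGP
      _ ≤ max (l * n2) ((k - l) * n1) := this
  -- the total count, computed exactly
  set K1 : ℕ := n1 * (l.factorial * (n1 - l).factorial) with hK1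
  set K2 : ℕ := n2 * ((k - l).factorial * (n2 - (k - l)).factorial) with hK2
  have htotal : ∑ π1 : Equiv.Perm (ZMod n1), ∑ π2 : Equiv.Perm (ZMod n2), cnt π1 π2
      = F.card * (K1 * K2) := by
    have hswap : ∑ π1 : Equiv.Perm (ZMod n1), ∑ π2 : Equiv.Perm (ZMod n2), cnt π1 π2
        = ∑ A ∈ F, (∑ π1 : Equiv.Perm (ZMod n1),
            (if ∃ i, (win n1 i l).image π1 = T1 A then 1 else 0))
          * (∑ π2 : Equiv.Perm (ZMod n2),
            (if ∃ j, (win n2 j (k - l)).image π2 = T2 A then 1 else 0)) := by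
      have e1' : ∀ π1 π2, cnt π1 π2 = ∑ A ∈ F,
          (if ∃ i, (win n1 i l).image π1 = T1 A then 1 else 0)
            * (if ∃ j, (win n2 j (k - l)).image π2 = T2 A then 1 else 0) := by
        intro π1 π2
        simp only [hcnt]
        rw [Finset.card_filter]
        refine Finset.sum_congr rfl (fun A _ => ?_)
        by_cases hc1 : ∃ i, (win n1 i l).image π1 = T1 A
        · by_cases hc2 : ∃ j, (win n2 j (k - l)).image π2 = T2 A
          · simp [hc1, hc2]
          · simp [hc1, hc2]
        · simp [hc1]
      calc ∑ π1 : Equiv.Perm (ZMod n1), ∑ π2 : Equiv.Perm (ZMod n2), cnt π1 π2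
          = ∑ π1 : Equiv.Perm (ZMod n1), ∑ π2 : Equiv.Perm (ZMod n2), ∑ A ∈ F,
              (if ∃ i, (win n1 i l).image π1 = T1 A then 1 else 0)
                * (if ∃ j, (win n2 j (k - l)).image π2 = T2 A then 1 else 0) :=
            Finset.sum_congr rfl (fun π1 _ => Finset.sum_congr rfl (fun π2 _ => e1' π1 π2))
        _ = ∑ π1 : Equiv.Perm (ZMod n1), ∑ A ∈ F, ∑ π2 : Equiv.Perm (ZMod n2),
              (if ∃ i, (win n1 i l).image π1 = T1 A then 1 else 0)
                * (if ∃ j, (win n2 j (k - l)).image π2 = T2 A then 1 else 0) :=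
            Finset.sum_congr rfl (fun π1 _ => Finset.sum_comm)
        _ = ∑ A ∈ F, ∑ π1 : Equiv.Perm (ZMod n1), ∑ π2 : Equiv.Perm (ZMod n2),
              (if ∃ i, (win n1 i l).image π1 = T1 A then 1 else 0)
                * (if ∃ j, (win n2 j (k - l)).image π2 = T2 A then 1 else 0) :=
            Finset.sum_comm
        _ = ∑ A ∈ F, (∑ π1 : Equiv.Perm (ZMod n1),
              (if ∃ i, (win n1 i l).image π1 = T1 A then 1 else 0))
            * (∑ π2 : Equiv.Perm (ZMod n2),
              (if ∃ j, (win n2 j (k - l)).image π2 = T2 A then 1 else 0)) := by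
            refine Finset.sum_congr rfl (fun A _ => ?_)
            rw [Finset.sum_mul]
            refine Finset.sum_congr rfl (fun π1 _ => ?_)
            rw [Finset.mul_sum]
    rw [hswap]
    have hcount1 : ∀ A ∈ F, (∑ π1 : Equiv.Perm (ZMod n1),
        (if ∃ i, (win n1 i l).image π1 = T1 A then 1 else 0)) = K1 := by
      intro A hA
      simp only [Finset.sum_boole, Nat.cast_id]
      exact card_perm_arc hl1 hln1 (hT1card A hA)
    have hcount2 : ∀ A ∈ F, (∑ π2 : Equiv.Perm (ZMod n2),
        (if ∃ j, (win n2 j (k - l)).image π2 = T2 A then 1 else 0)) = K2 := by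
      intro A hA
      simp only [Finset.sum_boole, Nat.cast_id]
      exact card_perm_arc hr hrn2 (hT2card A hA)
    rw [Finset.sum_congr rfl (fun A hA => by rw [hcount1 A hA, hcount2 A hA]),
      Finset.sum_const, smul_eq_mul]
  -- upper bound for the total
  have htotup : F.card * (K1 * K2)
      ≤ n1.factorial * (n2.factorial * max (l * n2) ((k - l) * n1)) := by
    rw [← htotal]
    calc ∑ π1 : Equiv.Perm (ZMod n1), ∑ π2 : Equiv.Perm (ZMod n2), cnt π1 π2
        ≤ ∑ _π1 : Equiv.Perm (ZMod n1), ∑ _π2 : Equiv.Perm (ZMod n2),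
            max (l * n2) ((k - l) * n1) :=
          Finset.sum_le_sum (fun π1 _ => Finset.sum_le_sum (fun π2 _ => hupper π1 π2))
      _ = n1.factorial * (n2.factorial * max (l * n2) ((k - l) * n1)) := by
          rw [Finset.sum_const, Finset.sum_const, Finset.card_univ, Finset.card_univ,
            Fintype.card_perm, Fintype.card_perm, ZMod.card, ZMod.card, smul_eq_mul,
            smul_eq_mul]
  -- arithmetic: convert the RHS
  have hmax : ∀ a b c : ℕ, c * max a b = max (c * a) (c * b) := by
    intro a b c
    rcases le_total a b with h | h
    · rw [max_eq_right h, max_eq_right (Nat.mul_le_mul_left c h)]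
    · rw [max_eq_left h, max_eq_left (Nat.mul_le_mul_left c h)]
  have hIa : (n1.factorial * n2.factorial) * (l * n2)
      = (K1 * K2) * ((n1 - 1).choose (l - 1) * n2.choose (k - l)) := by
    have e1' : (n1 - 1).choose (l - 1) * (l - 1).factorial * (n1 - l).factorial
        = (n1 - 1).factorial := by
      have := Nat.choose_mul_factorial_mul_factorial (show l - 1 ≤ n1 - 1 by omega)
      rwa [show (n1 - 1) - (l - 1) = n1 - l by omega] at this
    have e2' : n2.choose (k - l) * (k - l).factorial * (n2 - (k - l)).factorial
        = n2.factorial := Nat.choose_mul_factorial_mul_factorial (le_of_lt hrn2)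
    have e3' : n1.factorial = n1 * (n1 - 1).factorial := by
      conv_lhs => rw [show n1 = (n1 - 1) + 1 by omega]
      rw [Nat.factorial_succ]
      have hx : n1 - 1 + 1 = n1 := by omega
      rw [hx]
    have e4' : l.factorial = l * (l - 1).factorial := by
      conv_lhs => rw [show l = (l - 1) + 1 by omega]
      rw [Nat.factorial_succ]
      have hx : l - 1 + 1 = l := by omega
      rw [hx]
    rw [hK1, hK2, e3', e4', ← e1', ← e2']
    ring
  have hIb : (n1.factorial * n2.factorial) * ((k - l) * n1)
      = (K1 * K2) * (n1.choose l * (n2 - 1).choose (k - l - 1)) := by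
    have e1' : (n2 - 1).choose (k - l - 1) * (k - l - 1).factorial * (n2 - (k - l)).factorial
        = (n2 - 1).factorial := by
      have := Nat.choose_mul_factorial_mul_factorial
        (show (k - l) - 1 ≤ n2 - 1 by omega)
      rwa [show (n2 - 1) - ((k - l) - 1) = n2 - (k - l) by omega] at this
    have e2' : n1.choose l * l.factorial * (n1 - l).factorial = n1.factorial :=
      Nat.choose_mul_factorial_mul_factorial (le_of_lt hln1)
    have e3' : n2.factorial = n2 * (n2 - 1).factorial := by
      conv_lhs => rw [show n2 = (n2 - 1) + 1 by omega]
      rw [Nat.factorial_succ]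
      have hx : n2 - 1 + 1 = n2 := by omega
      rw [hx]
    have e4' : (k - l).factorial = (k - l) * (k - l - 1).factorial := by
      conv_lhs => rw [show (k - l) = ((k - l) - 1) + 1 by omega]
      rw [Nat.factorial_succ]
      have hx : k - l - 1 + 1 = k - l := by omega
      rw [hx]
    rw [hK1, hK2, e3', e4', ← e1', ← e2']
    ring
  have hrhs : n1.factorial * (n2.factorial * max (l * n2) ((k - l) * n1))
      = (K1 * K2) * max ((n1 - 1).choose (l - 1) * n2.choose (k - l))
          (n1.choose l * (n2 - 1).choose (k - l - 1)) := by
    have h0 : n1.factorial * (n2.factorial * max (l * n2) ((k - l) * n1))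
        = (n1.factorial * n2.factorial) * max (l * n2) ((k - l) * n1) := by ring
    rw [h0, hmax, hIa, hIb, ← hmax]
  rw [hrhs] at htotup
  have hKpos : 0 < K1 * K2 := by
    rw [hK1, hK2]
    exact Nat.mul_pos
      (Nat.mul_pos (by omega) (Nat.mul_pos (Nat.factorial_pos l) (Nat.factorial_pos (n1 - l))))
      (Nat.mul_pos (by omega)
        (Nat.mul_pos (Nat.factorial_pos (k - l)) (Nat.factorial_pos (n2 - (k - l)))))
  have := Nat.le_of_mul_le_mul_left
    (by
      calc (K1 * K2) * F.card = F.card * (K1 * K2) := by ring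
        _ ≤ (K1 * K2) * max ((n1 - 1).choose (l - 1) * n2.choose (k - l))
            (n1.choose l * (n2 - 1).choose (k - l - 1)) := htotup) hKpos
  exact this
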